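/- Let P = (x₁,…,xₙ : r₁,…,r_m) be a finite presentation and w a word in x₁,…,xₙ, and let G_w be the group presented by Q_w (which has n+4 generators and m+5 relators). Then G_w admits a presentation with 2 generators and m+1 relators: there exist m+1 elements of the free group of rank 2 such that the corresponding presented group is isomorphic to G_w. -/

import Mathlib

/-- Generators of the presentation `Q_w`: `Sum.inl i` is the generator `xᵢ`
(for `i : Fin n`), while `Sum.inr 0 = a`, `Sum.inr 1 = α`, `Sum.inr 2 = b`,
`Sum.inr 3 = β`. -/
abbrev QwGen (n : ℕ) := Fin n ⊕ Fin 4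

/-- The relators of the presentation `Q_w`: the relators `r₁, …, r_m` (indexed by
`Sum.inl j`), the relators (iii)/(iv) (indexed by `Sum.inr (Sum.inl i)`, zero-based:
for `i < p` the relator `a^{-qᵢ} xᵢ α^{qᵢ} (β^{-(i+1)} b β^{i+1})⁻¹` and for
`p ≤ i < n` the relator `a^{-(q+i+1)} xᵢ α^{q+i+1} (β^{-(i+1)} b β^{i+1})⁻¹`, where
`q = max {q₁, …, q_p}`), and the relators (i), (ii), (v)
(indexed by `Sum.inr (Sum.inr t)` for `t = 0, 1, 2`). -/
def qwRel (n m p : ℕ) (r : Fin m → FreeGroup (Fin n)) (q : Fin p → ℕ)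
    (w : FreeGroup (Fin n)) : Fin m ⊕ (Fin n ⊕ Fin 3) → FreeGroup (QwGen n) :=
  let a : FreeGroup (QwGen n) := FreeGroup.of (Sum.inr 0)
  let al : FreeGroup (QwGen n) := FreeGroup.of (Sum.inr 1)
  let b : FreeGroup (QwGen n) := FreeGroup.of (Sum.inr 2)
  let be : FreeGroup (QwGen n) := FreeGroup.of (Sum.inr 3)
  let x : Fin n → FreeGroup (QwGen n) := fun i => FreeGroup.of (Sum.inl i)
  let W : FreeGroup (QwGen n) := FreeGroup.map Sum.inl w
  let Q : ℕ := Finset.univ.sup q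
  fun j => match j with
  | Sum.inl j => FreeGroup.map Sum.inl (r j)
  | Sum.inr (Sum.inl i) =>
      if h : (i : ℕ) < p then
        a ^ (-(q ⟨i, h⟩ : ℤ)) * x i * al ^ (q ⟨i, h⟩) *
          (be ^ (-((i : ℕ) + 1 : ℤ)) * b * be ^ ((i : ℕ) + 1))⁻¹
      else
        a ^ (-((Q + (i : ℕ) + 1 : ℕ) : ℤ)) * x i * al ^ (Q + (i : ℕ) + 1) *
          (be ^ (-((i : ℕ) + 1 : ℤ)) * b * be ^ ((i : ℕ) + 1))⁻¹
  | Sum.inr (Sum.inr t) =>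
      if t = 0 then a * al * a⁻¹ * (b ^ 2)⁻¹
      else if t = 1 then al * a * al⁻¹ * (b * be * b⁻¹)⁻¹
      else (W * al ^ 2 * W⁻¹ * (al ^ 2)⁻¹) *
        (be ^ (-((n : ℤ) + 1)) * b * be ^ (n + 1))⁻¹

namespace QwAux

abbrev Aw : FreeGroup (Fin 2) := FreeGroup.of 0
abbrev Bw : FreeGroup (Fin 2) := FreeGroup.of 1
def alW : FreeGroup (Fin 2) := Aw⁻¹ * Bw ^ 2 * Aw
def beW : FreeGroup (Fin 2) := Bw⁻¹ * (alW * Aw * alW⁻¹) * Bw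

def E (n p : ℕ) (q : Fin p → ℕ) (i : Fin n) : ℤ :=
  if h : (i : ℕ) < p then (q ⟨i, h⟩ : ℤ) else ((Finset.univ.sup q + (i : ℕ) + 1 : ℕ) : ℤ)

def phi (n p : ℕ) (q : Fin p → ℕ) : QwGen n → FreeGroup (Fin 2) :=
  Sum.elim
    (fun i => Aw ^ E n p q i *
      (beW ^ (-((i : ℕ) + 1 : ℤ)) * Bw * beW ^ ((i : ℕ) + 1 : ℤ)) * alW ^ (-(E n p q i)))
    ![Aw, alW, Bw, beW]

def psi (n p : ℕ) (q : Fin p → ℕ) : FreeGroup (QwGen n) →* FreeGroup (Fin 2) :=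
  FreeGroup.lift (phi n p q)

variable (n m p : ℕ) (r : Fin m → FreeGroup (Fin n)) (q : Fin p → ℕ) (w : FreeGroup (Fin n))

lemma psi_rel_x (i : Fin n) : psi n p q (qwRel n m p r q w (Sum.inr (Sum.inl i))) = 1 := by
  rcases lt_or_ge (i : ℕ) p with h | h
  · have h2 : qwRel n m p r q w (Sum.inr (Sum.inl i)) =
        FreeGroup.of (Sum.inr 0 : Fin n ⊕ Fin 4) ^ (-(q ⟨i, h⟩ : ℤ)) *
          FreeGroup.of (Sum.inl i : QwGen n) *
          FreeGroup.of (Sum.inr 1 : Fin n ⊕ Fin 4) ^ (q ⟨i, h⟩) *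
          (FreeGroup.of (Sum.inr 3 : Fin n ⊕ Fin 4) ^ (-((i : ℕ) + 1 : ℤ)) *
            FreeGroup.of (Sum.inr 2 : Fin n ⊕ Fin 4) *
            FreeGroup.of (Sum.inr 3 : Fin n ⊕ Fin 4) ^ ((i : ℕ) + 1))⁻¹ := by
      simp [qwRel, h]
    have hE : E n p q i = (q ⟨i, h⟩ : ℤ) := by simp [E, h]
    rw [h2]
    simp only [psi, map_mul, map_inv, map_zpow, map_pow, FreeGroup.lift_apply_of, phi,
      Sum.elim_inl, Sum.elim_inr]
    rw [hE]
    simp only [Matrix.cons_val_zero, Matrix.cons_val_one, Matrix.head_cons,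
      Matrix.cons_val_two, Matrix.tail_cons, Matrix.cons_val_three, Matrix.head_fin_const]
    group
  · have h' : ¬ ((i : ℕ) < p) := not_lt.mpr h
    have h2 : qwRel n m p r q w (Sum.inr (Sum.inl i)) =
        FreeGroup.of (Sum.inr 0 : Fin n ⊕ Fin 4) ^
            (-((Finset.univ.sup q + (i : ℕ) + 1 : ℕ) : ℤ)) *
          FreeGroup.of (Sum.inl i : QwGen n) *
          FreeGroup.of (Sum.inr 1 : Fin n ⊕ Fin 4) ^ (Finset.univ.sup q + (i : ℕ) + 1) *
          (FreeGroup.of (Sum.inr 3 : Fin n ⊕ Fin 4) ^ (-((i : ℕ) + 1 : ℤ)) *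
            FreeGroup.of (Sum.inr 2 : Fin n ⊕ Fin 4) *
            FreeGroup.of (Sum.inr 3 : Fin n ⊕ Fin 4) ^ ((i : ℕ) + 1))⁻¹ := by
      simp [qwRel, h']
    have hE : E n p q i = ((Finset.univ.sup q + (i : ℕ) + 1 : ℕ) : ℤ) := by simp [E, h']
    rw [h2]
    simp only [psi, map_mul, map_inv, map_zpow, map_pow, FreeGroup.lift_apply_of, phi,
      Sum.elim_inl, Sum.elim_inr]
    rw [hE]
    simp only [Matrix.cons_val_zero, Matrix.cons_val_one, Matrix.head_cons,
      Matrix.cons_val_two, Matrix.tail_cons, Matrix.cons_val_three, Matrix.head_fin_const]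
    group

lemma psi_rel_0 : psi n p q (qwRel n m p r q w (Sum.inr (Sum.inr 0))) = 1 := by
  have h2 : qwRel n m p r q w (Sum.inr (Sum.inr 0)) =
      FreeGroup.of (Sum.inr 0 : Fin n ⊕ Fin 4) * FreeGroup.of (Sum.inr 1 : Fin n ⊕ Fin 4) *
        (FreeGroup.of (Sum.inr 0 : Fin n ⊕ Fin 4))⁻¹ *
        ((FreeGroup.of (Sum.inr 2 : Fin n ⊕ Fin 4)) ^ 2)⁻¹ := by
    simp [qwRel]
  rw [h2]
  simp only [psi, map_mul, map_inv, map_pow, FreeGroup.lift_apply_of, phi, Sum.elim_inr]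
  simp only [Matrix.cons_val_zero, Matrix.cons_val_one, Matrix.head_cons,
    Matrix.cons_val_two, Matrix.tail_cons]
  rw [alW]
  group

lemma psi_rel_1 : psi n p q (qwRel n m p r q w (Sum.inr (Sum.inr 1))) = 1 := by
  have h2 : qwRel n m p r q w (Sum.inr (Sum.inr 1)) =
      FreeGroup.of (Sum.inr 1 : Fin n ⊕ Fin 4) * FreeGroup.of (Sum.inr 0 : Fin n ⊕ Fin 4) *
        (FreeGroup.of (Sum.inr 1 : Fin n ⊕ Fin 4))⁻¹ *
        (FreeGroup.of (Sum.inr 2 : Fin n ⊕ Fin 4) * FreeGroup.of (Sum.inr 3 : Fin n ⊕ Fin 4) *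
          (FreeGroup.of (Sum.inr 2 : Fin n ⊕ Fin 4))⁻¹)⁻¹ := by
    simp [qwRel]
  rw [h2]
  simp only [psi, map_mul, map_inv, FreeGroup.lift_apply_of, phi, Sum.elim_inr]
  simp only [Matrix.cons_val_zero, Matrix.cons_val_one, Matrix.head_cons,
    Matrix.cons_val_two, Matrix.tail_cons, Matrix.cons_val_three, Matrix.head_fin_const]
  rw [beW]
  group

/-- The two-generator relator family. -/
def sFun : Fin (m + 1) → FreeGroup (Fin 2) := fun j =>
  if h : (j : ℕ) < m then psi n p q (qwRel n m p r q w (Sum.inl ⟨j, h⟩))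
  else psi n p q (qwRel n m p r q w (Sum.inr (Sum.inr 2)))

/-- interpreting the two generators in `G_w`. -/
def fGen : Fin 2 → PresentedGroup (Set.range (qwRel n m p r q w)) :=
  ![PresentedGroup.mk _ (FreeGroup.of (Sum.inr 0)),
    PresentedGroup.mk _ (FreeGroup.of (Sum.inr 2))]

lemma mk_rel_one {α : Type*} (rels : Set (FreeGroup α)) {x : FreeGroup α} (hx : x ∈ rels) :
    PresentedGroup.mk rels x = 1 :=
  (QuotientGroup.eq_one_iff _).mpr (Subgroup.subset_normalClosure hx)

lemma rel_one (j : Fin m ⊕ (Fin n ⊕ Fin 3)) :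
    PresentedGroup.mk (Set.range (qwRel n m p r q w)) (qwRel n m p r q w j) = 1 :=
  mk_rel_one _ ⟨j, rfl⟩

lemma chi_phi (g : QwGen n) :
    FreeGroup.lift (fGen n m p r q w) (phi n p q g) =
      PresentedGroup.mk (Set.range (qwRel n m p r q w)) (FreeGroup.of g) := by
  set R := Set.range (qwRel n m p r q w) with hR
  set a' := PresentedGroup.mk R (FreeGroup.of (Sum.inr 0 : QwGen n)) with ha'
  set al' := PresentedGroup.mk R (FreeGroup.of (Sum.inr 1 : QwGen n)) with hal'
  set b' := PresentedGroup.mk R (FreeGroup.of (Sum.inr 2 : QwGen n)) with hb'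
  set be' := PresentedGroup.mk R (FreeGroup.of (Sum.inr 3 : QwGen n)) with hbe'
  have hfA : FreeGroup.lift (fGen n m p r q w) Aw = a' := by
    simp [fGen, ← hR, ← ha']
    rfl
  have hfB : FreeGroup.lift (fGen n m p r q w) Bw = b' := by
    simp [fGen, ← hR, ← hb']
    rfl
  -- relation (i)
  have h0 : a' * al' * a'⁻¹ = b' ^ 2 := by
    have := rel_one n m p r q w (Sum.inr (Sum.inr 0))
    have h2 : qwRel n m p r q w (Sum.inr (Sum.inr 0)) =
        FreeGroup.of (Sum.inr 0 : Fin n ⊕ Fin 4) * FreeGroup.of (Sum.inr 1 : Fin n ⊕ Fin 4) *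
          (FreeGroup.of (Sum.inr 0 : Fin n ⊕ Fin 4))⁻¹ *
          ((FreeGroup.of (Sum.inr 2 : Fin n ⊕ Fin 4)) ^ 2)⁻¹ := by
      simp [qwRel]
    rw [h2] at this
    simp only [map_mul, map_inv, map_pow] at this
    rw [mul_inv_eq_one] at this
    exact this
  have halW : FreeGroup.lift (fGen n m p r q w) alW = al' := by
    rw [alW]
    simp only [map_mul, map_inv, map_pow, hfA, hfB]
    rw [← h0]; group
  -- relation (ii)
  have h1 : al' * a' * al'⁻¹ = b' * be' * b'⁻¹ := by
    have := rel_one n m p r q w (Sum.inr (Sum.inr 1))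
    have h2 : qwRel n m p r q w (Sum.inr (Sum.inr 1)) =
        FreeGroup.of (Sum.inr 1 : Fin n ⊕ Fin 4) * FreeGroup.of (Sum.inr 0 : Fin n ⊕ Fin 4) *
          (FreeGroup.of (Sum.inr 1 : Fin n ⊕ Fin 4))⁻¹ *
          (FreeGroup.of (Sum.inr 2 : Fin n ⊕ Fin 4) * FreeGroup.of (Sum.inr 3 : Fin n ⊕ Fin 4) *
            (FreeGroup.of (Sum.inr 2 : Fin n ⊕ Fin 4))⁻¹)⁻¹ := by
      simp [qwRel]
    rw [h2] at this
    simp only [map_mul, map_inv] at this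
    rw [mul_inv_eq_one] at this
    exact this
  have hbeW : FreeGroup.lift (fGen n m p r q w) beW = be' := by
    rw [beW]
    simp only [map_mul, map_inv, hfA, hfB, halW]
    rw [h1]
    group
  rcases g with i | k
  · -- generators xᵢ
    have hx : a' ^ (-(E n p q i)) * PresentedGroup.mk R (FreeGroup.of (Sum.inl i : QwGen n)) *
        al' ^ (E n p q i) =
        be' ^ (-((i : ℕ) + 1 : ℤ)) * b' * be' ^ ((i : ℕ) + 1 : ℤ) := by
      have := rel_one n m p r q w (Sum.inr (Sum.inl i))
      rcases lt_or_ge (i : ℕ) p with h | h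
      · have hE : E n p q i = (q ⟨i, h⟩ : ℤ) := by simp [E, h]
        have h2 : qwRel n m p r q w (Sum.inr (Sum.inl i)) =
            FreeGroup.of (Sum.inr 0 : Fin n ⊕ Fin 4) ^ (-(q ⟨i, h⟩ : ℤ)) *
              FreeGroup.of (Sum.inl i : QwGen n) *
              FreeGroup.of (Sum.inr 1 : Fin n ⊕ Fin 4) ^ (q ⟨i, h⟩) *
              (FreeGroup.of (Sum.inr 3 : Fin n ⊕ Fin 4) ^ (-((i : ℕ) + 1 : ℤ)) *
                FreeGroup.of (Sum.inr 2 : Fin n ⊕ Fin 4) *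
                FreeGroup.of (Sum.inr 3 : Fin n ⊕ Fin 4) ^ ((i : ℕ) + 1))⁻¹ := by
          simp [qwRel, h]
        rw [h2] at this
        simp only [map_mul, map_inv, map_zpow, map_pow] at this
        rw [mul_inv_eq_one] at this
        rw [hE, ← zpow_natCast al' (q ⟨i, h⟩)] at *
        exact this
      · have h' : ¬ ((i : ℕ) < p) := not_lt.mpr h
        have hE : E n p q i = ((Finset.univ.sup q + (i : ℕ) + 1 : ℕ) : ℤ) := by simp [E, h']
        have h2 : qwRel n m p r q w (Sum.inr (Sum.inl i)) =
            FreeGroup.of (Sum.inr 0 : Fin n ⊕ Fin 4) ^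
                (-((Finset.univ.sup q + (i : ℕ) + 1 : ℕ) : ℤ)) *
              FreeGroup.of (Sum.inl i : QwGen n) *
              FreeGroup.of (Sum.inr 1 : Fin n ⊕ Fin 4) ^ (Finset.univ.sup q + (i : ℕ) + 1) *
              (FreeGroup.of (Sum.inr 3 : Fin n ⊕ Fin 4) ^ (-((i : ℕ) + 1 : ℤ)) *
                FreeGroup.of (Sum.inr 2 : Fin n ⊕ Fin 4) *
                FreeGroup.of (Sum.inr 3 : Fin n ⊕ Fin 4) ^ ((i : ℕ) + 1))⁻¹ := by
          simp [qwRel, h']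
        rw [h2] at this
        simp only [map_mul, map_inv, map_zpow, map_pow] at this
        rw [mul_inv_eq_one] at this
        rw [hE, ← zpow_natCast al' (Finset.univ.sup q + (i : ℕ) + 1)] at *
        exact this
    show FreeGroup.lift (fGen n m p r q w) (phi n p q (Sum.inl i)) = _
    simp only [phi, Sum.elim_inl, map_mul, map_zpow, hfA, hfB, halW, hbeW]
    rw [← hx]
    group
    rfl
  · fin_cases k
    · exact hfA
    · exact halW
    · exact hfB
    · exact hbeW

end QwAux

/-- Let `P = (x₁,…,xₙ : r₁,…,r_m)` be a finite presentation and
`w` a word in `x₁,…,xₙ`, and let `G_w` be the group presented by `Q_w`.  Then `G_w`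
admits a presentation with 2 generators and `m+1` relators: there exist `m+1`
elements of the free group of rank 2 such that the corresponding presented group is
isomorphic to `G_w`. -/
theorem qw_two_generator_presentation (n m p : ℕ) (hp1 : 1 ≤ p) (hpn : p ≤ n)
    (r : Fin m → FreeGroup (Fin n)) (q : Fin p → ℕ)
    (w : FreeGroup (Fin n)) :
    ∃ s : Fin (m + 1) → FreeGroup (Fin 2),
      Nonempty (PresentedGroup (Set.range s) ≃*
        PresentedGroup (Set.range (qwRel n m p r q w))) := by
  classical
  refine ⟨QwAux.sFun n m p r q w, ?_⟩
  set R := Set.range (qwRel n m p r q w) with hR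
  set S := Set.range (QwAux.sFun n m p r q w) with hS
  have hchi : (FreeGroup.lift (QwAux.fGen n m p r q w)).comp (QwAux.psi n p q) =
      PresentedGroup.mk R := by
    apply FreeGroup.ext_hom
    intro g
    simp only [MonoidHom.comp_apply, QwAux.psi, FreeGroup.lift_apply_of]
    exact QwAux.chi_phi n m p r q w g
  have hΦ : ∀ x ∈ S, FreeGroup.lift (QwAux.fGen n m p r q w) x = 1 := by
    rintro _ ⟨j, rfl⟩
    unfold QwAux.sFun
    split
    · rw [← MonoidHom.comp_apply, hchi]; exact QwAux.rel_one n m p r q w _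
    · rw [← MonoidHom.comp_apply, hchi]; exact QwAux.rel_one n m p r q w _
  have hkey : FreeGroup.lift (fun g => PresentedGroup.mk S (QwAux.phi n p q g)) =
      (PresentedGroup.mk S).comp (QwAux.psi n p q) := by
    apply FreeGroup.ext_hom; intro g
    simp [QwAux.psi]
  have hΨ : ∀ x ∈ R,
      FreeGroup.lift (fun g => PresentedGroup.mk S (QwAux.phi n p q g)) x = 1 := by
    rintro _ ⟨j, rfl⟩
    rw [hkey, MonoidHom.comp_apply]
    match j with
    | Sum.inl j =>
        apply QwAux.mk_rel_one
        refine ⟨⟨(j : ℕ), by omega⟩, ?_⟩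
        have hj : ((⟨(j : ℕ), by omega⟩ : Fin (m + 1)) : ℕ) < m := j.isLt
        rw [QwAux.sFun, dif_pos hj]
    | Sum.inr (Sum.inl i) =>
        rw [QwAux.psi_rel_x n m p r q w i, map_one]
    | Sum.inr (Sum.inr t) =>
        fin_cases t
        · show PresentedGroup.mk S
              (QwAux.psi n p q (qwRel n m p r q w (Sum.inr (Sum.inr 0)))) = 1
          rw [QwAux.psi_rel_0 n m p r q w, map_one]
        · show PresentedGroup.mk S
              (QwAux.psi n p q (qwRel n m p r q w (Sum.inr (Sum.inr 1)))) = 1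
          rw [QwAux.psi_rel_1 n m p r q w, map_one]
        · show PresentedGroup.mk S
              (QwAux.psi n p q (qwRel n m p r q w (Sum.inr (Sum.inr 2)))) = 1
          apply QwAux.mk_rel_one
          refine ⟨Fin.last m, ?_⟩
          rw [QwAux.sFun, dif_neg (by simp)]
  have hΦmk : ∀ z, PresentedGroup.toGroup hΦ (PresentedGroup.mk S z) =
      FreeGroup.lift (QwAux.fGen n m p r q w) z := fun z => rfl
  have hΨmk : ∀ z, PresentedGroup.toGroup hΨ (PresentedGroup.mk R z) =
      FreeGroup.lift (fun g => PresentedGroup.mk S (QwAux.phi n p q g)) z := fun z => rfl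
  refine ⟨MonoidHom.toMulEquiv (PresentedGroup.toGroup hΦ) (PresentedGroup.toGroup hΨ) ?_ ?_⟩
  · apply PresentedGroup.ext
    intro x
    simp only [MonoidHom.comp_apply, MonoidHom.id_apply, PresentedGroup.toGroup.of]
    fin_cases x
    · show PresentedGroup.toGroup hΨ
        (PresentedGroup.mk R (FreeGroup.of (Sum.inr 0 : QwGen n))) = _
      rw [hΨmk, FreeGroup.lift_apply_of]
      rfl
    · show PresentedGroup.toGroup hΨ
        (PresentedGroup.mk R (FreeGroup.of (Sum.inr 2 : QwGen n))) = _
      rw [hΨmk, FreeGroup.lift_apply_of]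
      rfl
  · apply PresentedGroup.ext
    intro g
    simp only [MonoidHom.comp_apply, MonoidHom.id_apply, PresentedGroup.toGroup.of]
    rw [hΦmk, QwAux.chi_phi]
    rfl
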